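/- Let S_x be an N×N matrix depending polynomially on a complex parameter x, such that det(S_x) vanishes at x=0 to order exactly d = dim Ker(S_0). Then the limits A = lim_{x→0} (S_x/x) restricted to Ker(S_0) and B = lim_{x→0} x·S_x^{-1} both exist; moreover Ran(A) is a complement of Ran(S_0), Ker(B) = Ran(S_0), Ran(B) = Ker(S_0), B∘A is the identity on Ker(S_0), and A∘B is the projection with image Ran(A) and kernel Ran(S_0). -/

import Mathlib

open Matrix Polynomial Filter

/-- Smith normal form factorization for square matrices over a PID domain. -/
lemma exists_smith_fact {R : Type} [CommRing R] [IsDomain R] [IsPrincipalIdealRing R]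
    {N : ℕ} (p : Matrix (Fin N) (Fin N) R) (hp : p.det ≠ 0) :
    ∃ (U V : Matrix (Fin N) (Fin N) R) (a : Fin N → R),
      IsUnit U.det ∧ IsUnit V.det ∧ p = U * Matrix.diagonal a * V := by
  classical
  set φ := p.mulVecLin with hφ
  have hinj : Function.Injective φ := by
    rw [← LinearMap.ker_eq_bot, Submodule.eq_bot_iff]
    intro v hv
    have h0 : p.mulVec v = 0 := hv
    have h1 : (p.adjugate * p).mulVec v = 0 := by
      rw [← Matrix.mulVec_mulVec, h0, Matrix.mulVec_zero]
    rw [Matrix.adjugate_mul, Matrix.smul_mulVec, Matrix.one_mulVec] at h1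
    funext i
    have := congrFun h1 i
    simp only [Pi.smul_apply, smul_eq_mul, Pi.zero_apply] at this
    rcases mul_eq_zero.mp this with h | h
    · exact absurd h hp
    · exact h
  set Nr := LinearMap.range φ with hNr
  obtain ⟨n, snf⟩ := Nr.smithNormalForm (Pi.basisFun R (Fin N))
  let e0 : (Fin N → R) ≃ₗ[R] Nr := LinearEquiv.ofInjective φ hinj
  have he0 : ∀ m : Nr, φ (e0.symm m) = (m : Fin N → R) := by
    intro m
    conv_rhs => rw [← e0.apply_symm_apply m]
    exact (LinearEquiv.ofInjective_apply φ (h := hinj) (e0.symm m)).symm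
  have hn : n = N := by
    have idx := snf.bN.indexEquiv ((Pi.basisFun R (Fin N)).map e0)
    simpa using Fintype.card_congr idx
  set bN' : Module.Basis (Fin N) R Nr := snf.bN.reindex (finCongr hn) with hbN'
  set f' : Fin N → Fin N := fun j => snf.f ((finCongr hn).symm j) with hf'
  set a' : Fin N → R := fun j => snf.a ((finCongr hn).symm j) with ha'
  have hsnf : ∀ j, (bN' j : Fin N → R) = a' j • snf.bM (f' j) := by
    intro j; simp [hbN', snf.snf, ha', hf']
  have hf'inj : Function.Injective f' := fun i j h =>
    (finCongr hn).symm.injective (snf.f.injective h)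
  have hf'bij : Function.Bijective f' := (Finite.injective_iff_bijective).mp hf'inj
  set U : Matrix (Fin N) (Fin N) R :=
    Matrix.of (fun i j => (snf.bM (f' j) : Fin N → R) i) with hU
  set W : Matrix (Fin N) (Fin N) R :=
    Matrix.of (fun i j => (e0.symm (bN' j) : Fin N → R) i) with hW
  have hUdet : IsUnit U.det := by
    have hUeq : U = (Pi.basisFun R (Fin N)).toMatrix
        ⇑(snf.bM.reindex (Equiv.ofBijective f' hf'bij).symm) := by
      ext i j
      simp [hU, Module.Basis.toMatrix]
    rw [hUeq]
    exact Matrix.isUnit_det_of_right_inverse (Module.Basis.toMatrix_mul_toMatrix_flip _ _)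
  have hWdet : IsUnit W.det := by
    have hWeq : W = (Pi.basisFun R (Fin N)).toMatrix ⇑(bN'.map e0.symm) := by
      ext i j
      simp [hW, Module.Basis.toMatrix]
    rw [hWeq]
    exact Matrix.isUnit_det_of_right_inverse (Module.Basis.toMatrix_mul_toMatrix_flip _ _)
  have key : p * W = U * Matrix.diagonal a' := by
    ext i j
    have hcol : p.mulVec (fun k => W k j) = a' j • (snf.bM (f' j) : Fin N → R) := by
      have h2 : φ (e0.symm (bN' j)) = p.mulVec (fun k => W k j) := rfl
      rw [← hsnf, ← he0 (bN' j), h2]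
    have hthis := congrFun hcol i
    simp only [Matrix.mulVec, dotProduct] at hthis
    simp only [Matrix.mul_apply, Matrix.diagonal_apply, mul_ite, mul_zero,
      Finset.sum_ite_eq', Finset.mem_univ, if_true, hU, Matrix.of_apply]
    rw [hthis]
    simp [mul_comm]
  have : Invertible W := W.invertibleOfIsUnitDet hWdet
  refine ⟨U, ⅟W, a', hUdet, ?_, ?_⟩
  · exact Matrix.isUnit_det_of_right_inverse (invOf_mul_self W)
  · calc p = p * (W * ⅟W) := by rw [mul_invOf_self, mul_one]
    _ = (p * W) * ⅟W := by rw [mul_assoc]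
    _ = U * Matrix.diagonal a' * ⅟W := by rw [key]

/-- difference-quotient limit for polynomials vanishing at 0. -/
lemma poly_slope (r : Polynomial ℂ) (h0 : r.eval 0 = 0) :
    Tendsto (fun x : ℂ => x⁻¹ * r.eval x) (nhdsWithin 0 {0}ᶜ)
      (nhds (r.derivative.eval 0)) := by
  have hd : HasDerivAt (fun x : ℂ => r.eval x) (r.derivative.eval 0) 0 := r.hasDerivAt 0
  rw [hasDerivAt_iff_tendsto_slope] at hd
  have heq : ∀ x : ℂ, slope (fun x : ℂ => r.eval x) 0 x = x⁻¹ * r.eval x := by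
    intro x
    rw [slope_def_field, h0, sub_zero, sub_zero, div_eq_inv_mul]
  exact Tendsto.congr heq hd

/-- evaluation commutes with `mulVec` against constants. -/
lemma eval_mulVec_C {N : ℕ} (P : Matrix (Fin N) (Fin N) (Polynomial ℂ)) (v : Fin N → ℂ)
    (x : ℂ) (i : Fin N) :
    ((P.mulVec (fun j => C (v j))) i).eval x = (P.map (eval x)).mulVec v i := by
  simp [Matrix.mulVec, dotProduct, Polynomial.eval_finset_sum]

/-- derivative-at-0 commutes with `mulVec` against constants. -/
lemma deval_mulVec_C {N : ℕ} (P : Matrix (Fin N) (Fin N) (Polynomial ℂ)) (v : Fin N → ℂ)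
    (i : Fin N) :
    (((P.mulVec (fun j => C (v j))) i).derivative).eval 0
      = (P.map (fun f => f.derivative.eval 0)).mulVec v i := by
  simp only [Matrix.mulVec, dotProduct, map_sum, Polynomial.derivative_mul,
    Polynomial.derivative_C, mul_zero, add_zero, Polynomial.eval_finset_sum]
  simp [Polynomial.eval_mul]

/-- matrix-level Leibniz rule for derivative-at-0. -/
lemma map_deval_mul {N : ℕ} (P Q : Matrix (Fin N) (Fin N) (Polynomial ℂ)) :
    (P * Q).map (fun f => f.derivative.eval 0)
      = P.map (fun f => f.derivative.eval 0) * Q.map (eval 0)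
        + P.map (eval 0) * Q.map (fun f => f.derivative.eval 0) := by
  ext i j
  simp only [Matrix.map_apply, Matrix.mul_apply, Matrix.add_apply, map_sum,
    Polynomial.derivative_mul, Polynomial.eval_finset_sum, Polynomial.eval_add,
    Polynomial.eval_mul, ← Finset.sum_add_distrib]

theorem stmt1 (N : ℕ) (p : Matrix (Fin N) (Fin N) (Polynomial ℂ))
    (S : ℂ → Matrix (Fin N) (Fin N) ℂ)
    (hS : ∀ (x : ℂ) (i j : Fin N), S x i j = (p i j).eval x)
    (hdet0 : p.det ≠ 0)
    (d : ℕ)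
    (hd : d = Module.finrank ℂ (LinearMap.ker (S 0).mulVecLin))
    (hdiv : (Polynomial.X : Polynomial ℂ) ^ d ∣ p.det)
    (hndiv : ¬ (Polynomial.X : Polynomial ℂ) ^ (d + 1) ∣ p.det) :
    ∃ (A : ↥(LinearMap.ker (S 0).mulVecLin) →ₗ[ℂ] (Fin N → ℂ))
      (B : Matrix (Fin N) (Fin N) ℂ),
      (∀ v : ↥(LinearMap.ker (S 0).mulVecLin),
        Filter.Tendsto (fun x : ℂ => x⁻¹ • (S x).mulVec (v : Fin N → ℂ))
          (nhdsWithin 0 {0}ᶜ) (nhds (A v))) ∧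
      Filter.Tendsto (fun x : ℂ => x • (S x)⁻¹) (nhdsWithin 0 {0}ᶜ) (nhds B) ∧
      IsCompl (LinearMap.range A) (LinearMap.range (S 0).mulVecLin) ∧
      LinearMap.ker B.mulVecLin = LinearMap.range (S 0).mulVecLin ∧
      LinearMap.range B.mulVecLin = LinearMap.ker (S 0).mulVecLin ∧
      (∀ v : ↥(LinearMap.ker (S 0).mulVecLin), B.mulVec (A v) = (v : Fin N → ℂ)) ∧
      ∃ hmem : ∀ v : Fin N → ℂ, B.mulVec v ∈ LinearMap.ker (S 0).mulVecLin,
        (∀ v : Fin N → ℂ, v ∈ LinearMap.range A → A ⟨B.mulVec v, hmem v⟩ = v) ∧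
        (∀ v : Fin N → ℂ, v ∈ LinearMap.range (S 0).mulVecLin →
          A ⟨B.mulVec v, hmem v⟩ = 0) := by
  classical
  obtain ⟨U, V, a, hUu, hVu, hfact⟩ := exists_smith_fact p hdet0
  set dE : Polynomial ℂ → ℂ := fun f => f.derivative.eval 0 with hdE
  -- basic evaluated objects
  set Ue : ℂ → Matrix (Fin N) (Fin N) ℂ := fun x => U.map (eval x) with hUe
  set Ve : ℂ → Matrix (Fin N) (Fin N) ℂ := fun x => V.map (eval x) with hVe
  have hSmap : ∀ x : ℂ, S x = p.map (eval x) := by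
    intro x; ext i j; rw [hS]; rfl
  have hSx : ∀ x : ℂ, S x = Ue x * Matrix.diagonal (fun i => (a i).eval x) * Ve x := by
    intro x
    rw [hSmap, hfact]
    simp only [← Polynomial.coe_evalRingHom, Matrix.map_mul]
    rw [Matrix.diagonal_map (by simp)]
    rfl
  obtain ⟨cU, hcU, hCU⟩ := Polynomial.isUnit_iff.mp hUu
  obtain ⟨cV, hcV, hCV⟩ := Polynomial.isUnit_iff.mp hVu
  have hUdet : ∀ x : ℂ, (Ue x).det = cU := by
    intro x
    have h := RingHom.map_det (evalRingHom x) U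
    rw [RingHom.mapMatrix_apply, Polynomial.coe_evalRingHom] at h
    rw [hUe]; simp only []
    rw [← h, ← hCU]; simp
  have hVdet : ∀ x : ℂ, (Ve x).det = cV := by
    intro x
    have h := RingHom.map_det (evalRingHom x) V
    rw [RingHom.mapMatrix_apply, Polynomial.coe_evalRingHom] at h
    rw [hVe]; simp only []
    rw [← h, ← hCV]; simp
  have hUex : ∀ x : ℂ, IsUnit (Ue x).det := fun x => by rw [hUdet]; exact hcU
  have hVex : ∀ x : ℂ, IsUnit (Ve x).det := fun x => by rw [hVdet]; exact hcV
  set U0 : Matrix (Fin N) (Fin N) ℂ := Ue 0 with hU0def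
  set V0 : Matrix (Fin N) (Fin N) ℂ := Ve 0 with hV0def
  have hU0l : U0⁻¹ * U0 = 1 := Matrix.nonsing_inv_mul _ (hUex 0)
  have hU0r : U0 * U0⁻¹ = 1 := Matrix.mul_nonsing_inv _ (hUex 0)
  have hV0l : V0⁻¹ * V0 = 1 := Matrix.nonsing_inv_mul _ (hVex 0)
  have hV0r : V0 * V0⁻¹ = 1 := Matrix.mul_nonsing_inv _ (hVex 0)
  have hU0lv : ∀ w : Fin N → ℂ, U0⁻¹.mulVec (U0.mulVec w) = w := fun w => by
    rw [Matrix.mulVec_mulVec, hU0l, Matrix.one_mulVec]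
  have hU0rv : ∀ w : Fin N → ℂ, U0.mulVec (U0⁻¹.mulVec w) = w := fun w => by
    rw [Matrix.mulVec_mulVec, hU0r, Matrix.one_mulVec]
  have hV0lv : ∀ w : Fin N → ℂ, V0⁻¹.mulVec (V0.mulVec w) = w := fun w => by
    rw [Matrix.mulVec_mulVec, hV0l, Matrix.one_mulVec]
  have hV0rv : ∀ w : Fin N → ℂ, V0.mulVec (V0⁻¹.mulVec w) = w := fun w => by
    rw [Matrix.mulVec_mulVec, hV0r, Matrix.one_mulVec]
  set Z : Fin N → Prop := fun i => (a i).eval 0 = 0 with hZdef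
  set δ : Fin N → ℂ := fun i => (a i).derivative.eval 0 with hδdef
  set K : Submodule ℂ (Fin N → ℂ) := LinearMap.ker (S 0).mulVecLin with hKdef
  -- kernel and range characterizations
  have hS0v : ∀ v : Fin N → ℂ, (S 0).mulVec v
      = U0.mulVec ((Matrix.diagonal fun i => (a i).eval 0).mulVec (V0.mulVec v)) := by
    intro v
    rw [hSx 0, ← Matrix.mulVec_mulVec, ← Matrix.mulVec_mulVec]
  have hker : ∀ v : Fin N → ℂ, v ∈ K ↔ ∀ i, ¬ Z i → V0.mulVec v i = 0 := by
    intro v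
    constructor
    · intro hv i hi
      have h0 : (S 0).mulVec v = 0 := hv
      have h1 : (Matrix.diagonal fun i => (a i).eval 0).mulVec (V0.mulVec v) = 0 := by
        have h2 : U0⁻¹.mulVec ((S 0).mulVec v) = 0 := by rw [h0, Matrix.mulVec_zero]
        rw [hS0v, hU0lv] at h2
        exact h2
      have h2 := congrFun h1 i
      rw [Matrix.mulVec_diagonal] at h2
      exact (mul_eq_zero.mp h2).resolve_left hi
    · intro hv
      show (S 0).mulVec v = 0
      rw [hS0v]
      have : (Matrix.diagonal fun i => (a i).eval 0).mulVec (V0.mulVec v) = 0 := by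
        funext i
        rw [Matrix.mulVec_diagonal]
        by_cases hZi : Z i
        · rw [hZi, zero_mul]; rfl
        · rw [hv i hZi, mul_zero]; rfl
      rw [this, Matrix.mulVec_zero]
  have hrange : ∀ w : Fin N → ℂ, w ∈ LinearMap.range (S 0).mulVecLin
      ↔ ∀ i, Z i → U0⁻¹.mulVec w i = 0 := by
    intro w
    constructor
    · rintro ⟨v, rfl⟩ i hi
      rw [Matrix.mulVecLin_apply, hS0v, hU0lv, Matrix.mulVec_diagonal, hi, zero_mul]
    · intro hw
      refine ⟨V0⁻¹.mulVec (fun i => if Z i then 0 else ((a i).eval 0)⁻¹ * U0⁻¹.mulVec w i), ?_⟩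
      rw [Matrix.mulVecLin_apply, hS0v, hV0rv]
      have : (Matrix.diagonal fun i => (a i).eval 0).mulVec
          (fun i => if Z i then 0 else ((a i).eval 0)⁻¹ * U0⁻¹.mulVec w i) = U0⁻¹.mulVec w := by
        funext i
        rw [Matrix.mulVec_diagonal]
        by_cases hZi : Z i
        · rw [if_pos hZi, mul_zero]
          exact (hw i hZi).symm
        · rw [if_neg hZi, ← mul_assoc, mul_inv_cancel₀ hZi, one_mul]
      rw [this, hU0rv]
  -- dimension of the kernel equals the number of vanishing diagonal entries
  have hcard : Module.finrank ℂ K = Fintype.card {i // Z i} := by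
    let g : K →ₗ[ℂ] ({i // Z i} → ℂ) :=
      (LinearMap.pi fun i : {i // Z i} => (LinearMap.proj i.1).comp V0.mulVecLin).comp K.subtype
    have hg : ∀ (v : K) (i : {i // Z i}), g v = fun i => V0.mulVec (v : Fin N → ℂ) i.1 := by
      intro v i; rfl
    have hginj : Function.Injective g := by
      intro v w hvw
      ext1
      have h1 : V0.mulVec (v : Fin N → ℂ) = V0.mulVec (w : Fin N → ℂ) := by
        funext i
        by_cases hZi : Z i
        · exact congrFun hvw ⟨i, hZi⟩
        · rw [(hker _).mp v.2 i hZi, (hker _).mp w.2 i hZi]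
      have := congrArg (fun u => V0⁻¹.mulVec u) h1
      simpa [hV0lv] using this
    have hgsurj : Function.Surjective g := by
      intro c
      set u : Fin N → ℂ := fun i => if h : Z i then c ⟨i, h⟩ else 0 with hu
      have huV : V0.mulVec (V0⁻¹.mulVec u) = u := hV0rv u
      have hvK : V0⁻¹.mulVec u ∈ K := by
        rw [hker]
        intro i hi
        rw [huV, hu]
        exact dif_neg hi
      refine ⟨⟨V0⁻¹.mulVec u, hvK⟩, ?_⟩
      funext i
      show V0.mulVec (V0⁻¹.mulVec u) i.1 = c i
      rw [huV, hu]
      simp only []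
      rw [dif_pos i.2, Subtype.coe_eta]
    rw [LinearEquiv.finrank_eq (LinearEquiv.ofBijective g ⟨hginj, hgsurj⟩), Module.finrank_pi]
  have hdT : Fintype.card {i // Z i} = d := by rw [hd]; exact hcard.symm
  -- each polynomial `a i` is nonzero
  have hdetfact : p.det = U.det * (∏ i, a i) * V.det := by
    rw [hfact, Matrix.det_mul, Matrix.det_mul, Matrix.det_diagonal]
  have hane : ∀ i, a i ≠ 0 := by
    intro i hi
    apply hdet0
    rw [hdetfact, Finset.prod_eq_zero (Finset.mem_univ i) hi]
    ring
  -- vanishing entries vanish to order exactly one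
  have hb : ∀ i, Z i → ∃ b : Polynomial ℂ, a i = X * b ∧ b.eval 0 ≠ 0 := by
    intro i hZi
    obtain ⟨b, hab⟩ := (Polynomial.X_dvd_iff (f := a i)).mpr
      (by rw [Polynomial.coeff_zero_eq_eval_zero]; exact hZi)
    refine ⟨b, hab, ?_⟩
    intro hb0
    apply hndiv
    obtain ⟨b2, hb2⟩ := (Polynomial.X_dvd_iff (f := b)).mpr
      (by rw [Polynomial.coeff_zero_eq_eval_zero]; exact hb0)
    set Tset : Finset (Fin N) := Finset.univ.filter Z with hTset
    have hiT : i ∈ Tset := Finset.mem_filter.mpr ⟨Finset.mem_univ i, hZi⟩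
    have hTcard : Tset.card = d := by
      rw [← hdT, Fintype.card_subtype]
    have hdvd1 : (X : Polynomial ℂ) ^ ((Tset.erase i).card)
        ∣ ∏ j ∈ Tset.erase i, a j := by
      have := Finset.prod_dvd_prod_of_dvd (s := Tset.erase i) (fun _ => (X : Polynomial ℂ))
        a (fun j hj => by
          have hjT : j ∈ Tset := Finset.mem_of_mem_erase hj
          have hZj : Z j := (Finset.mem_filter.mp hjT).2
          exact (Polynomial.X_dvd_iff (f := a j)).mpr
            (by rw [Polynomial.coeff_zero_eq_eval_zero]; exact hZj))
      simpa [Finset.prod_const] using this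
    have hdvd2 : (X : Polynomial ℂ) ^ (d + 1) ∣ ∏ j ∈ Tset, a j := by
      rw [← Finset.mul_prod_erase Tset a hiT]
      have hcarderase : (Tset.erase i).card = d - 1 := by
        rw [Finset.card_erase_of_mem hiT, hTcard]
      have hd1 : 1 ≤ d := by
        rw [← hTcard]
        exact Finset.card_pos.mpr ⟨i, hiT⟩
      have hXa : (X : Polynomial ℂ) ^ 2 ∣ a i := by
        rw [hab, hb2]
        exact ⟨b2, by ring⟩
      have : (X : Polynomial ℂ) ^ (d + 1) = X ^ 2 * X ^ (d - 1) := by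
        rw [← pow_add]
        congr 1
        omega
      rw [this]
      exact mul_dvd_mul hXa (hcarderase ▸ hdvd1)
    have hdvd3 : (∏ j ∈ Tset, a j) ∣ ∏ j, a j :=
      Finset.prod_dvd_prod_of_subset Tset Finset.univ a (Finset.subset_univ Tset)
    have hdvd4 : (∏ j, a j) ∣ p.det := by
      rw [hdetfact]
      exact ⟨U.det * V.det, by ring⟩
    exact (hdvd2.trans hdvd3).trans hdvd4
  have hδne : ∀ i, Z i → δ i ≠ 0 := by
    intro i hZi
    obtain ⟨b, hab, hb0⟩ := hb i hZi
    rw [hδdef]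
    simp only [hab, Polynomial.derivative_mul, Polynomial.derivative_X, one_mul,
      Polynomial.eval_add, Polynomial.eval_mul, Polynomial.eval_X, zero_mul, add_zero]
    simpa using hb0
  -- eventually all diagonal entries are nonzero
  have hev : ∀ᶠ x in nhdsWithin (0:ℂ) {0}ᶜ, ∀ i, (a i).eval x ≠ 0 := by
    rw [eventually_all]
    intro i
    by_cases hZi : Z i
    · obtain ⟨b, hab, hb0⟩ := hb i hZi
      have h1 : ∀ᶠ x : ℂ in nhds 0, b.eval x ≠ 0 :=
        (b.continuous.continuousAt).eventually_ne hb0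
      have h2 : ∀ᶠ x : ℂ in nhdsWithin (0:ℂ) {0}ᶜ, b.eval x ≠ 0 :=
        h1.filter_mono nhdsWithin_le_nhds
      have h3 : ∀ᶠ x : ℂ in nhdsWithin (0:ℂ) {0}ᶜ, x ≠ 0 := by
        filter_upwards [self_mem_nhdsWithin] with x hx
        exact hx
      filter_upwards [h2, h3] with x hbx hx
      rw [hab]
      simp only [Polynomial.eval_mul, Polynomial.eval_X]
      exact mul_ne_zero hx hbx
    · have h1 : ∀ᶠ x : ℂ in nhds 0, (a i).eval x ≠ 0 :=
        ((a i).continuous.continuousAt).eventually_ne hZi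
      exact h1.filter_mono nhdsWithin_le_nhds
  -- main algebraic objects
  set DV : Matrix (Fin N) (Fin N) (Polynomial ℂ) := Matrix.diagonal a * V with hDVdef
  set M0 : Matrix (Fin N) (Fin N) ℂ := DV.map (fun f => f.derivative.eval 0) with hM0def
  set DV0 : Matrix (Fin N) (Fin N) ℂ := DV.map (eval 0) with hDV0def
  set E : Matrix (Fin N) (Fin N) ℂ :=
    Matrix.diagonal (fun i => if Z i then (δ i)⁻¹ else 0) with hEdef
  set B : Matrix (Fin N) (Fin N) ℂ := V0⁻¹ * E * U0⁻¹ with hBdef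
  set Atil : Matrix (Fin N) (Fin N) ℂ := p.map (fun f => f.derivative.eval 0) with hAtildef
  set A : K →ₗ[ℂ] (Fin N → ℂ) := Atil.mulVecLin ∘ₗ K.subtype with hAdef
  have hAv : ∀ v : K, A v = Atil.mulVec (v : Fin N → ℂ) := fun v => rfl
  -- structure of DV0 and M0
  have hDV0 : DV0 = Matrix.diagonal (fun i => (a i).eval 0) * V0 := by
    rw [hDV0def, hDVdef]
    simp only [← Polynomial.coe_evalRingHom, Matrix.map_mul]
    rw [Matrix.diagonal_map (by simp)]
    rfl
  have hDV0v : ∀ (v : Fin N → ℂ) k, DV0.mulVec v k = (a k).eval 0 * (V0.mulVec v) k := by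
    intro v k
    rw [hDV0, ← Matrix.mulVec_mulVec, Matrix.mulVec_diagonal]
  have hDV0K : ∀ v : Fin N → ℂ, v ∈ K → DV0.mulVec v = 0 := by
    intro v hv
    funext k
    rw [hDV0v]
    by_cases hZk : Z k
    · rw [hZk, zero_mul]; rfl
    · rw [(hker v).mp hv k hZk, mul_zero]; rfl
  have e1 : (Matrix.diagonal a).map (fun f : Polynomial ℂ => f.derivative.eval 0)
      = Matrix.diagonal δ := by
    rw [Matrix.diagonal_map (by simp), hδdef]
  have e2 : (Matrix.diagonal a).map (eval 0)
      = Matrix.diagonal (fun i => (a i).eval 0) := Matrix.diagonal_map (by simp)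
  have e3 : V.map (eval 0) = V0 := rfl
  have e4 : U.map (eval 0) = U0 := rfl
  have hM0 : M0 = Matrix.diagonal δ * V0 + Matrix.diagonal (fun i => (a i).eval 0)
      * (V.map (fun f => f.derivative.eval 0)) := by
    rw [hM0def, hDVdef, map_deval_mul, e1, e2, e3]
  have hM0v : ∀ (v : Fin N → ℂ) i, Z i → M0.mulVec v i = δ i * (V0.mulVec v) i := by
    intro v i hZi
    rw [hM0, Matrix.add_mulVec]
    have h1 : (Matrix.diagonal δ * V0).mulVec v i = δ i * (V0.mulVec v) i := by
      rw [← Matrix.mulVec_mulVec, Matrix.mulVec_diagonal]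
    have h2 : ((Matrix.diagonal (fun i => (a i).eval 0))
        * (V.map (fun f => f.derivative.eval 0))).mulVec v i = 0 := by
      rw [← Matrix.mulVec_mulVec, Matrix.mulVec_diagonal, hZi, zero_mul]
    simp only [Pi.add_apply]
    rw [h1, h2, add_zero]
  have hAtilK : ∀ v : Fin N → ℂ, v ∈ K → Atil.mulVec v = U0.mulVec (M0.mulVec v) := by
    intro v hv
    have hpUDV : p = U * DV := by rw [hfact, hDVdef, mul_assoc]
    have h1 : Atil = (U.map (fun f => f.derivative.eval 0)) * DV0 + U0 * M0 := by
      rw [hAtildef, hpUDV, map_deval_mul, hDV0def, hM0def, e4]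
    rw [h1, Matrix.add_mulVec, ← Matrix.mulVec_mulVec, hDV0K v hv, Matrix.mulVec_zero,
      zero_add, ← Matrix.mulVec_mulVec]
  have hEvec : ∀ (u : Fin N → ℂ) i, E.mulVec u i = if Z i then (δ i)⁻¹ * u i else 0 := by
    intro u i
    rw [hEdef, Matrix.mulVec_diagonal, ite_mul, zero_mul]
  have hBv : ∀ w : Fin N → ℂ, B.mulVec w = V0⁻¹.mulVec (E.mulVec (U0⁻¹.mulVec w)) := by
    intro w
    rw [hBdef, ← Matrix.mulVec_mulVec, ← Matrix.mulVec_mulVec]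
  have hmem : ∀ w : Fin N → ℂ, B.mulVec w ∈ K := by
    intro w
    rw [hker]
    intro i hi
    rw [hBv, hV0rv, hEvec, if_neg hi]
  have hBA : ∀ v : K, B.mulVec (Atil.mulVec (v : Fin N → ℂ)) = (v : Fin N → ℂ) := by
    intro v
    rw [hAtilK _ v.2, hBv, hU0lv]
    have hEM : E.mulVec (M0.mulVec (v : Fin N → ℂ)) = V0.mulVec (v : Fin N → ℂ) := by
      funext i
      rw [hEvec]
      by_cases hZi : Z i
      · rw [if_pos hZi, hM0v _ i hZi, inv_mul_cancel_left₀ (hδne i hZi)]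
      · rw [if_neg hZi, (hker _).mp v.2 i hZi]
    rw [hEM, hV0lv]
  -- statement (4)
  have hkerB : LinearMap.ker B.mulVecLin = LinearMap.range (S 0).mulVecLin := by
    ext w
    rw [LinearMap.mem_ker, Matrix.mulVecLin_apply, hrange]
    constructor
    · intro hw i hi
      have h1 : E.mulVec (U0⁻¹.mulVec w) = 0 := by
        have h2 := congrArg (fun u => V0.mulVec u) hw
        simp only [Matrix.mulVec_zero] at h2
        rw [hBv, hV0rv] at h2
        exact h2
      have h3 := congrFun h1 i
      rw [hEvec, if_pos hi] at h3
      exact (mul_eq_zero.mp h3).resolve_left (inv_ne_zero (hδne i hi))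
    · intro hw
      rw [hBv]
      have h1 : E.mulVec (U0⁻¹.mulVec w) = 0 := by
        funext i
        rw [hEvec]
        by_cases hZi : Z i
        · rw [if_pos hZi, hw i hZi, mul_zero]; rfl
        · rw [if_neg hZi]; rfl
      rw [h1, Matrix.mulVec_zero]
  -- statement (5)
  have hrangeB : LinearMap.range B.mulVecLin = K := by
    ext v
    constructor
    · rintro ⟨u, rfl⟩
      exact hmem u
    · intro hv
      refine ⟨U0.mulVec (fun i => if Z i then δ i * (V0.mulVec v) i else 0), ?_⟩
      rw [Matrix.mulVecLin_apply, hBv, hU0lv]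
      have hEu : E.mulVec (fun i => if Z i then δ i * (V0.mulVec v) i else 0)
          = V0.mulVec v := by
        funext i
        rw [hEvec]
        by_cases hZi : Z i
        · rw [if_pos hZi, if_pos hZi, inv_mul_cancel_left₀ (hδne i hZi)]
        · rw [if_neg hZi, (hker v).mp hv i hZi]
      rw [hEu, hV0lv]
  -- IsCompl
  have hdisj : Disjoint (LinearMap.range A) (LinearMap.range (S 0).mulVecLin) := by
    rw [Submodule.disjoint_def]
    rintro w ⟨v, rfl⟩ hwS
    rw [hAv] at hwS ⊢
    have h1 : ∀ i, Z i → (M0.mulVec (v : Fin N → ℂ)) i = 0 := by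
      intro i hi
      have h2 := (hrange _).mp hwS i hi
      rw [hAtilK _ v.2, hU0lv] at h2
      exact h2
    have h3 : V0.mulVec (v : Fin N → ℂ) = 0 := by
      funext i
      simp only [Pi.zero_apply]
      by_cases hZi : Z i
      · have h4 := h1 i hZi
        rw [hM0v _ i hZi] at h4
        exact (mul_eq_zero.mp h4).resolve_left (hδne i hZi)
      · exact (hker _).mp v.2 i hZi
    have h4 : (v : Fin N → ℂ) = 0 := by
      have h5 := congrArg (fun u => V0⁻¹.mulVec u) h3
      simpa [hV0lv] using h5
    rw [h4, Matrix.mulVec_zero]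
  have hcodisj : Codisjoint (LinearMap.range A) (LinearMap.range (S 0).mulVecLin) := by
    rw [codisjoint_iff, Submodule.eq_top_iff']
    intro w
    refine Submodule.mem_sup.mpr ⟨Atil.mulVec (B.mulVec w),
      ⟨⟨B.mulVec w, hmem w⟩, (hAv _)⟩, w - Atil.mulVec (B.mulVec w), ?_, by abel⟩
    rw [hrange]
    intro i hi
    rw [Matrix.mulVec_sub]
    simp only [Pi.sub_apply]
    have h5 : U0⁻¹.mulVec (Atil.mulVec (B.mulVec w)) = M0.mulVec (B.mulVec w) := by
      rw [hAtilK _ (hmem w), hU0lv]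
    rw [h5, hM0v _ i hi]
    have h6 : V0.mulVec (B.mulVec w) = E.mulVec (U0⁻¹.mulVec w) := by
      rw [hBv, hV0rv]
    rw [h6, hEvec, if_pos hi, mul_inv_cancel_left₀ (hδne i hi), sub_self]
  -- limit statement for A
  have hL1 : ∀ v : K, Tendsto (fun x : ℂ => x⁻¹ • (S x).mulVec (v : Fin N → ℂ))
      (nhdsWithin 0 {0}ᶜ) (nhds (A v)) := by
    intro v
    rw [tendsto_pi_nhds]
    intro i
    have hS0 : (S 0).mulVec (v : Fin N → ℂ) = 0 := v.2
    have h0 : ((p.mulVec (fun j => C ((v : Fin N → ℂ) j))) i).eval 0 = 0 := by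
      rw [eval_mulVec_C, show p.map (eval 0) = S 0 from (hSmap 0).symm, hS0]
      rfl
    have hAvi : A v i = ((p.mulVec (fun j => C ((v : Fin N → ℂ) j))) i).derivative.eval 0 := by
      rw [hAv, hAtildef]
      exact (deval_mulVec_C p _ i).symm
    rw [hAvi]
    refine (poly_slope _ h0).congr fun x => ?_
    rw [eval_mulVec_C, show p.map (eval x) = S x from (hSmap x).symm]
    simp [Pi.smul_apply, smul_eq_mul]
  -- limit statement for B
  have hinvt : ∀ (Wm : Matrix (Fin N) (Fin N) (Polynomial ℂ)) (c : ℂ),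
      (∀ x : ℂ, (Wm.map (eval x)).det = c) →
      Tendsto (fun x : ℂ => (Wm.map (eval x))⁻¹) (nhdsWithin 0 {0}ᶜ)
        (nhds ((Wm.map (eval 0))⁻¹)) := by
    intro Wm c hc
    have hform : ∀ x : ℂ, (Wm.map (eval x))⁻¹ = c⁻¹ • (Wm.adjugate.map (eval x)) := by
      intro x
      have hadj : Wm.adjugate.map (eval x) = (Wm.map (eval x)).adjugate := by
        have h := RingHom.map_adjugate (evalRingHom x) Wm
        rw [RingHom.mapMatrix_apply, RingHom.mapMatrix_apply, Polynomial.coe_evalRingHom] at h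
        exact h
      rw [Matrix.inv_def, hc x, Ring.inverse_eq_inv', hadj]
    rw [show (Wm.map (eval 0))⁻¹ = c⁻¹ • (Wm.adjugate.map (eval 0)) from hform 0]
    refine Tendsto.congr (fun x => (hform x).symm) ?_
    refine tendsto_pi_nhds.mpr ?_
    intro i
    rw [tendsto_pi_nhds]
    intro j
    have hcont : Continuous fun x : ℂ => c⁻¹ * (Wm.adjugate i j).eval x :=
      continuous_const.mul (Wm.adjugate i j).continuous
    refine Tendsto.congr (fun x => ?_) ((hcont.tendsto 0).mono_left nhdsWithin_le_nhds)
    simp [Matrix.smul_apply, Matrix.map_apply, smul_eq_mul]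
  have hVt : Tendsto (fun x : ℂ => (Ve x)⁻¹) (nhdsWithin 0 {0}ᶜ) (nhds V0⁻¹) :=
    hinvt V cV hVdet
  have hUt : Tendsto (fun x : ℂ => (Ue x)⁻¹) (nhdsWithin 0 {0}ᶜ) (nhds U0⁻¹) :=
    hinvt U cU hUdet
  have hmid : Tendsto (fun x : ℂ => Matrix.diagonal (fun i => x * ((a i).eval x)⁻¹))
      (nhdsWithin 0 {0}ᶜ) (nhds E) := by
    refine tendsto_pi_nhds.mpr ?_
    intro i
    rw [tendsto_pi_nhds]
    intro j
    by_cases hij : i = j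
    · subst hij
      have hEii : E i i = if Z i then (δ i)⁻¹ else 0 := by
        rw [hEdef, Matrix.diagonal_apply_eq]
      rw [show (fun x : ℂ => Matrix.diagonal (fun k => x * ((a k).eval x)⁻¹) i i)
          = fun x : ℂ => x * ((a i).eval x)⁻¹ from funext fun x => Matrix.diagonal_apply_eq _ i,
        hEii]
      by_cases hZi : Z i
      · rw [if_pos hZi]
        have hsl := poly_slope (a i) hZi
        have hinv := hsl.inv₀ (hδne i hZi)
        refine hinv.congr' ?_
        filter_upwards [self_mem_nhdsWithin] with x hx
        have hx0 : (x : ℂ) ≠ 0 := hx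
        rw [mul_inv, inv_inv, mul_comm]
      · rw [if_neg hZi]
        have h1 : Tendsto (fun x : ℂ => x * ((a i).eval x)⁻¹) (nhds 0)
            (nhds (0 * ((a i).eval 0)⁻¹)) :=
          tendsto_id.mul (((a i).continuous.tendsto 0).inv₀ hZi)
        rw [zero_mul] at h1
        exact h1.mono_left nhdsWithin_le_nhds
    · have h2 : ∀ x : ℂ, Matrix.diagonal (fun k => x * ((a k).eval x)⁻¹) i j = 0 :=
        fun x => Matrix.diagonal_apply_ne _ hij
      have h3 : E i j = 0 := by
        rw [hEdef]
        exact Matrix.diagonal_apply_ne _ hij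
      rw [h3]
      exact Tendsto.congr (fun x => (h2 x).symm) tendsto_const_nhds
  have heq : ∀ᶠ x in nhdsWithin (0:ℂ) {0}ᶜ, x • (S x)⁻¹
      = (Ve x)⁻¹ * Matrix.diagonal (fun i => x * ((a i).eval x)⁻¹) * (Ue x)⁻¹ := by
    filter_upwards [hev] with x hx
    have hdiaginv : (Matrix.diagonal fun i => (a i).eval x)⁻¹
        = Matrix.diagonal (fun i => ((a i).eval x)⁻¹) := by
      refine Matrix.inv_eq_left_inv ?_
      rw [Matrix.diagonal_mul_diagonal,
        show (fun i => ((a i).eval x)⁻¹ * (a i).eval x) = fun _ => (1:ℂ) from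
          funext fun i => inv_mul_cancel₀ (hx i), Matrix.diagonal_one]
    rw [hSx x, Matrix.mul_inv_rev, Matrix.mul_inv_rev, hdiaginv]
    calc x • ((Ve x)⁻¹ * ((Matrix.diagonal fun i => ((a i).eval x)⁻¹) * (Ue x)⁻¹))
        = (Ve x)⁻¹ * (x • ((Matrix.diagonal fun i => ((a i).eval x)⁻¹) * (Ue x)⁻¹)) := by
          rw [Matrix.mul_smul]
      _ = (Ve x)⁻¹ * ((x • (Matrix.diagonal fun i => ((a i).eval x)⁻¹)) * (Ue x)⁻¹) := by
          rw [Matrix.smul_mul]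
      _ = (Ve x)⁻¹ * (Matrix.diagonal (fun i => x * ((a i).eval x)⁻¹) * (Ue x)⁻¹) := by
          rw [← Matrix.diagonal_smul]
          rfl
      _ = (Ve x)⁻¹ * Matrix.diagonal (fun i => x * ((a i).eval x)⁻¹) * (Ue x)⁻¹ := by
          rw [mul_assoc]
  have hL2 : Tendsto (fun x : ℂ => x • (S x)⁻¹) (nhdsWithin 0 {0}ᶜ) (nhds B) := by
    have hprod : Tendsto (fun x : ℂ => (Ve x)⁻¹
        * Matrix.diagonal (fun i => x * ((a i).eval x)⁻¹) * (Ue x)⁻¹)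
        (nhdsWithin 0 {0}ᶜ) (nhds (V0⁻¹ * E * U0⁻¹)) :=
      (hVt.mul hmid).mul hUt
    rw [hBdef]
    exact hprod.congr' (heq.mono fun x h => h.symm)
  -- assemble
  refine ⟨A, B, hL1, hL2, ⟨hdisj, hcodisj⟩, hkerB, hrangeB,
    (fun v => by rw [hAv]; exact hBA v), hmem, ?_, ?_⟩
  · rintro v ⟨u, rfl⟩
    have hsub : (⟨B.mulVec (A u), hmem _⟩ : K) = u := by
      apply Subtype.ext
      show B.mulVec (A u) = (u : Fin N → ℂ)
      rw [hAv]
      exact hBA u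
    rw [hsub]
  · intro v hv
    have hBv0 : B.mulVec v = 0 := by
      have h1 : v ∈ LinearMap.ker B.mulVecLin := hkerB ▸ hv
      exact h1
    have hsub : (⟨B.mulVec v, hmem v⟩ : K) = 0 := by
      apply Subtype.ext
      show B.mulVec v = ((0 : K) : Fin N → ℂ)
      rw [hBv0]
      rfl
    rw [hsub, map_zero]
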